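/- Let K ⊂ ℝⁿ be a compact set and d ∈ ℕ. The dual cone of C_d(K), the cone of polynomials of degree at most d nonnegative on K (identified with their coefficient vectors in ℝ^{s(d)}), equals the truncated moment cone Δ_d = {(∫_K x^α dφ)_{|α| ≤ d} : φ a finite nonnegative Borel measure on K}. -/

import Mathlib

open MeasureTheory

open Set Finset in
theorem aux_isCompact_convexHull {E : Type*} [NormedAddCommGroup E] [NormedSpace ℝ E]
    [FiniteDimensional ℝ E] {S : Set E} (hS : IsCompact S) :
    IsCompact (convexHull ℝ S) := by
  classical
  rcases S.eq_empty_or_nonempty with rfl | ⟨p, hp⟩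
  · simpa using isCompact_empty
  set m := Module.finrank ℝ E + 1 with hm
  set F : (Fin m → ℝ) × (Fin m → E) → E := fun q => ∑ i, q.1 i • q.2 i with hF
  have hFcont : Continuous F := by
    apply continuous_finset_sum
    intro i _
    exact ((continuous_apply i).comp continuous_fst).smul ((continuous_apply i).comp continuous_snd)
  have hD : IsCompact ((stdSimplex ℝ (Fin m)) ×ˢ (Set.univ.pi fun _ : Fin m => S)) :=
    IsCompact.prod (isCompact_stdSimplex (𝕜 := ℝ) (ι := Fin m)) (isCompact_univ_pi fun _ => hS)
  have himg : F '' ((stdSimplex ℝ (Fin m)) ×ˢ (Set.univ.pi fun _ : Fin m => S)) = convexHull ℝ S := by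
    apply Set.Subset.antisymm
    · rintro _ ⟨⟨w, z⟩, ⟨⟨hw0, hw1⟩, hz⟩, rfl⟩
      exact (convex_convexHull ℝ S).sum_mem (fun i _ => hw0 i) hw1
        (fun i _ => subset_convexHull ℝ S (hz i (mem_univ i)))
    · intro x hx
      obtain ⟨ι, hι, z, w, hzS, hai, hw0, hw1, hwz⟩ := eq_pos_convex_span_of_mem_convexHull hx
      haveI inst : Fintype ι := hι
      rw [Subsingleton.elim hι inst] at hw1 hwz
      have hne : Nonempty ι := by
        by_contra h
        rw [not_nonempty_iff] at h
        simp [Finset.univ_eq_empty] at hw1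
      have hcard : Fintype.card ι ≤ m := by
        have h1 := hai.finrank_vectorSpan_add_one
        have h2 : Module.finrank ℝ (vectorSpan ℝ (Set.range z)) ≤ Module.finrank ℝ E :=
          Submodule.finrank_le _
        omega
      obtain ⟨f⟩ : Nonempty (ι ↪ Fin m) := by
        rw [Function.Embedding.nonempty_iff_card_le]
        simpa using hcard
      set w' : Fin m → ℝ := fun j => if h : ∃ i, f i = j then w h.choose else 0 with hw'
      set z' : Fin m → E := fun j => if h : ∃ i, f i = j then z h.choose else p with hz'
      have hkey : ∀ i : ι, w' (f i) = w i ∧ z' (f i) = z i := by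
        intro i
        have h : ∃ i', f i' = f i := ⟨i, rfl⟩
        have : h.choose = i := f.injective h.choose_spec
        constructor <;> simp [hw', hz', dif_pos h, this]
      have hsubset : ∀ j : Fin m, j ∉ Finset.univ.image f → w' j = 0 := by
        intro j hj
        have : ¬ ∃ i, f i = j := by
          intro ⟨i, hi⟩
          exact hj (Finset.mem_image.2 ⟨i, Finset.mem_univ i, hi⟩)
        simp [hw', dif_neg this]
      refine ⟨(w', z'), ⟨⟨?_, ?_⟩, ?_⟩, ?_⟩
      · intro j
        by_cases h : ∃ i, f i = j
        · simpa [hw', dif_pos h] using (hw0 h.choose).le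
        · simp [hw', dif_neg h]
      · rw [← Finset.sum_subset (Finset.subset_univ (Finset.univ.image f))
          (fun j _ hj => hsubset j hj)]
        rw [Finset.sum_image (fun a _ b _ h => f.injective h)]
        simp only [fun i => (hkey i).1]
        exact hw1
      · intro j _
        by_cases h : ∃ i, f i = j
        · simp only [hz', dif_pos h]
          exact hzS ⟨h.choose, rfl⟩
        · simpa [hz', dif_neg h] using hp
      · show ∑ j, w' j • z' j = x
        rw [← Finset.sum_subset (Finset.subset_univ (Finset.univ.image f))
          (fun j _ hj => by rw [hsubset j hj, zero_smul])]
        rw [Finset.sum_image (fun a _ b _ h => f.injective h)]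
        simp only [fun i => (hkey i).1, fun i => (hkey i).2]
        exact hwz
  rw [← himg]
  exact hD.image hFcont

theorem dual_cone_of_nonneg_polynomials_eq_moment_cone
    (n d : ℕ) (K : Set (Fin n → ℝ)) (hK : IsCompact K)
    (C : Set ({α : Fin n → Fin (d+1) // ∑ i, (α i : ℕ) ≤ d} → ℝ))
    (hC : C = {f | ∀ x ∈ K,
      0 ≤ ∑ a : {α : Fin n → Fin (d+1) // ∑ i, (α i : ℕ) ≤ d},
            f a * ∏ i, x i ^ ((a : Fin n → Fin (d+1)) i : ℕ)})
    (Δ : Set ({α : Fin n → Fin (d+1) // ∑ i, (α i : ℕ) ≤ d} → ℝ))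
    (hΔ : Δ = {y | ∃ φ : Measure (Fin n → ℝ), IsFiniteMeasure φ ∧ φ Kᶜ = 0 ∧
      ∀ a : {α : Fin n → Fin (d+1) // ∑ i, (α i : ℕ) ≤ d},
        y a = ∫ x, ∏ i, x i ^ ((a : Fin n → Fin (d+1)) i : ℕ) ∂φ}) :
    {y | ∀ f ∈ C, 0 ≤ ∑ a : {α : Fin n → Fin (d+1) // ∑ i, (α i : ℕ) ≤ d}, y a * f a}
      = Δ := by
  classical
  subst hC hΔ
  set I := {α : Fin n → Fin (d+1) // ∑ i, (α i : ℕ) ≤ d} with hIdef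
  set v : (Fin n → ℝ) → I → ℝ := fun x a => ∏ i, x i ^ ((a : Fin n → Fin (d+1)) i : ℕ) with hv
  have hvcont : Continuous v :=
    continuous_pi fun a => continuous_finset_prod _ fun i _ => ((continuous_apply i).pow _)
  -- trivial case : K = ∅
  rcases K.eq_empty_or_nonempty with rfl | ⟨x₀, hx₀⟩
  · ext y
    simp only [Set.mem_setOf_eq]
    constructor
    · intro hy
      have h2 : ∑ a : I, y a * y a ≤ 0 := by
        have h := hy (fun a => -(y a)) (fun x hx => absurd hx (Set.notMem_empty x))
        simpa [mul_neg, Finset.sum_neg_distrib, neg_nonneg] using h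
      have h3 : ∀ a ∈ Finset.univ, y a * y a = 0 := by
        rw [← Finset.sum_eq_zero_iff_of_nonneg (fun a _ => mul_self_nonneg (y a))]
        exact le_antisymm h2 (Finset.sum_nonneg fun a _ => mul_self_nonneg (y a))
      refine ⟨0, inferInstance, by simp, fun a => ?_⟩
      rw [integral_zero_measure]
      exact mul_self_eq_zero.mp (h3 a (Finset.mem_univ a))
    · rintro ⟨φ, hfin, hφ, hmom⟩ f hf
      have hφ0 : φ = 0 := by
        apply Measure.measure_univ_eq_zero.mp
        simpa using hφ
      have hy0 : ∀ a, y a = 0 := fun a => by rw [hmom a, hφ0, integral_zero_measure]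
      simp [hy0]
  -- main case
  set S : Set (I → ℝ) := v '' K with hS
  have hScpt : IsCompact S := hK.image hvcont
  set T : Set (I → ℝ) := convexHull ℝ S with hT
  have hTcpt : IsCompact T := aux_isCompact_convexHull hScpt
  have hTconv : Convex ℝ T := convex_convexHull _ _
  set D : Set (I → ℝ) := {y | ∃ t : ℝ, 0 ≤ t ∧ ∃ w ∈ T, y = t • w} with hD
  set a₀ : I := ⟨fun _ => (0 : Fin (d+1)), by simp⟩ with ha₀
  have hva₀ : ∀ x, v x a₀ = 1 := by intro x; simp [hv, ha₀]
  have hT1 : ∀ w ∈ T, w a₀ = 1 := by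
    intro w hw
    have hsub : T ⊆ {u : I → ℝ | u a₀ = 1} := by
      rw [hT]
      apply convexHull_min
      · rintro _ ⟨x, hx, rfl⟩; exact hva₀ x
      · exact convex_hyperplane (IsLinearMap.mk (fun u u' => rfl) (fun c u => rfl)) 1
    exact hsub hw
  have h0D : (0 : I → ℝ) ∈ D := ⟨0, le_refl _, v x₀, subset_convexHull ℝ S ⟨x₀, hx₀, rfl⟩, (zero_smul ℝ _).symm⟩
  have hvD : ∀ x ∈ K, v x ∈ D :=
    fun x hx => ⟨1, zero_le_one, v x, subset_convexHull ℝ S ⟨x, hx, rfl⟩, (one_smul ℝ _).symm⟩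
  have hDconv : Convex ℝ D := by
    rintro y1 ⟨t1, ht1, w1, hw1, rfl⟩ y2 ⟨t2, ht2, w2, hw2, rfl⟩ a b ha hb hab
    rcases (add_nonneg (mul_nonneg ha ht1) (mul_nonneg hb ht2)).eq_or_lt with heq | hpos
    · have h1 : a * t1 = 0 := by nlinarith [mul_nonneg ha ht1, mul_nonneg hb ht2]
      have h2 : b * t2 = 0 := by nlinarith [mul_nonneg ha ht1, mul_nonneg hb ht2]
      have hz : a • t1 • w1 + b • t2 • w2 = 0 := by
        rw [smul_smul, smul_smul, h1, h2]
        simp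
      rw [hz]
      exact h0D
    · refine ⟨a * t1 + b * t2, hpos.le,
        (a * t1 / (a * t1 + b * t2)) • w1 + (b * t2 / (a * t1 + b * t2)) • w2, ?_, ?_⟩
      · apply hTconv hw1 hw2 (div_nonneg (mul_nonneg ha ht1) hpos.le)
          (div_nonneg (mul_nonneg hb ht2) hpos.le)
        field_simp
      · rw [smul_add, smul_smul, smul_smul, smul_smul, smul_smul]
        congr 2 <;> field_simp
  have hDclosed : IsClosed D := by
    apply IsSeqClosed.isClosed
    intro u y hu huy
    choose t ht w hw hrepr using hu
    obtain ⟨w₀, hw₀T, ψ, hψ, hwlim⟩ := hTcpt.tendsto_subseq hw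
    have huyψ : Filter.Tendsto (fun j => u (ψ j)) Filter.atTop (nhds y) :=
      huy.comp hψ.tendsto_atTop
    have hueq : ∀ j, u (ψ j) = t (ψ j) • w (ψ j) := fun j => hrepr (ψ j)
    have htlim : Filter.Tendsto (fun j => t (ψ j)) Filter.atTop (nhds (y a₀)) := by
      have h1 : Filter.Tendsto (fun j => u (ψ j) a₀) Filter.atTop (nhds (y a₀)) :=
        ((continuous_apply a₀).tendsto y).comp huyψ
      have h2 : ∀ j, u (ψ j) a₀ = t (ψ j) := by
        intro j
        rw [hueq j]
        simp [hT1 _ (hw (ψ j))]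
      simpa only [h2] using h1
    have hwlim' : Filter.Tendsto (fun j => w (ψ j)) Filter.atTop (nhds w₀) := hwlim
    have hlim2 : Filter.Tendsto (fun j => t (ψ j) • w (ψ j)) Filter.atTop (nhds (y a₀ • w₀)) :=
      htlim.smul hwlim'
    have hyeq : y = y a₀ • w₀ := by
      apply tendsto_nhds_unique _ hlim2
      have : (fun j => t (ψ j) • w (ψ j)) = fun j => u (ψ j) :=
        funext fun j => (hueq j).symm
      rw [this]
      exact huyψ
    have hy0 : 0 ≤ y a₀ :=
      le_of_tendsto_of_tendsto' tendsto_const_nhds htlim (fun j => ht (ψ j))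
    exact ⟨y a₀, hy0, w₀, hw₀T, hyeq⟩
  -- D is contained in the dual cone
  have hDdual : ∀ y ∈ D, ∀ f ∈ {f : I → ℝ | ∀ x ∈ K, 0 ≤ ∑ a, f a * v x a},
      0 ≤ ∑ a, y a * f a := by
    rintro y ⟨t, ht, w, hwT, rfl⟩ f hf
    have hlin : IsLinearMap ℝ (fun u : I → ℝ => ∑ a : I, f a * u a) := by
      constructor
      · intro u u'
        simp [mul_add, Finset.sum_add_distrib]
      · intro c u
        simp only [Pi.smul_apply, smul_eq_mul, Finset.mul_sum]
        apply Finset.sum_congr rfl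
        intro a _
        ring
    have hconv : Convex ℝ {u : I → ℝ | 0 ≤ ∑ a : I, f a * u a} := convex_halfSpace_ge hlin 0
    have hwmem : 0 ≤ ∑ a : I, f a * w a := by
      have hsub : T ⊆ {u : I → ℝ | 0 ≤ ∑ a : I, f a * u a} := by
        rw [hT]
        exact convexHull_min (by rintro _ ⟨x, hx, rfl⟩; exact hf x hx) hconv
      exact hsub hwT
    have heq : ∑ a : I, (t • w) a * f a = t * ∑ a : I, f a * w a := by
      rw [Finset.mul_sum]
      apply Finset.sum_congr rfl
      intro a _
      simp only [Pi.smul_apply, smul_eq_mul]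
      ring
    rw [heq]
    exact mul_nonneg ht hwmem
  -- dual cone ⊆ D by separation
  have hdualD : ∀ y, (∀ f ∈ {f : I → ℝ | ∀ x ∈ K, 0 ≤ ∑ a, f a * v x a}, 0 ≤ ∑ a, y a * f a)
      → y ∈ D := by
    intro y hy
    by_contra hyD
    obtain ⟨l, u, hlD, hl⟩ := geometric_hahn_banach_closed_point hDconv hDclosed hyD
    have hu0 : 0 < u := by simpa using hlD 0 h0D
    have hlnonpos : ∀ z ∈ D, l z ≤ 0 := by
      intro z hz
      by_contra hpos
      push_neg at hpos
      have hmem : ((u + 1) / l z) • z ∈ D := by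
        obtain ⟨t, ht, w, hwT, rfl⟩ := hz
        exact ⟨((u + 1) / l (t • w)) * t,
          mul_nonneg (div_nonneg (by linarith) hpos.le) ht, w, hwT, smul_smul _ _ _⟩
      have hcon := hlD _ hmem
      rw [l.map_smul, smul_eq_mul, div_mul_cancel₀ _ (ne_of_gt hpos)] at hcon
      linarith
    set f : I → ℝ := fun a => -(l (fun j => if a = j then 1 else 0)) with hfdef
    have hlform : ∀ p : I → ℝ, l p = ∑ a : I, p a * l (fun j => if a = j then 1 else 0) := by
      intro p
      conv_lhs => rw [pi_eq_sum_univ p]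
      rw [map_sum]
      apply Finset.sum_congr rfl
      intro a _
      rw [l.map_smul, smul_eq_mul]
    have hfC : ∀ x ∈ K, 0 ≤ ∑ a : I, f a * v x a := by
      intro x hx
      have heq : ∑ a : I, f a * v x a = -(l (v x)) := by
        rw [hlform (v x), ← Finset.sum_neg_distrib]
        apply Finset.sum_congr rfl
        intro a _
        simp only [hfdef]
        ring
      rw [heq, neg_nonneg]
      exact hlnonpos _ (hvD x hx)
    have h1 : 0 ≤ ∑ a : I, y a * f a := hy f hfC
    have h2 : ∑ a : I, y a * f a = -(l y) := by
      rw [hlform y, ← Finset.sum_neg_distrib]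
      apply Finset.sum_congr rfl
      intro a _
      simp only [hfdef]
      ring
    rw [h2] at h1
    linarith
  -- Δ ⊆ D
  have hΔD : ∀ y : I → ℝ, (∃ φ : Measure (Fin n → ℝ), IsFiniteMeasure φ ∧ φ Kᶜ = 0 ∧
      ∀ a : I, y a = ∫ x, v x a ∂φ) → y ∈ D := by
    rintro y ⟨φ, hfin, hφK, hmom⟩
    by_cases h0 : φ = 0
    · have hy0 : y = 0 := funext fun a => by rw [hmom a, h0, integral_zero_measure]; simp
      rw [hy0]
      exact h0D
    · haveI := hfin
      haveI : NeZero φ := ⟨h0⟩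
      set μ := (φ Set.univ)⁻¹ • φ with hμ
      haveI : IsProbabilityMeasure μ := MeasureTheory.isProbabilityMeasureSMul
      have hμK : μ Kᶜ = 0 := by
        rw [hμ]
        simp [Measure.smul_apply, hφK]
      have haeK : ∀ᵐ x ∂μ, x ∈ K := by
        rw [MeasureTheory.ae_iff]
        exact hμK
      obtain ⟨M, hM⟩ := hScpt.isBounded.exists_norm_le
      have haeT : ∀ᵐ x ∂μ, v x ∈ T :=
        haeK.mono fun x hx => subset_convexHull ℝ S ⟨x, hx, rfl⟩
      have hint : Integrable v μ := by
        apply MeasureTheory.Integrable.mono' (integrable_const M) hvcont.aestronglyMeasurable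
        exact haeK.mono fun x hx => hM _ ⟨x, hx, rfl⟩
      have hwT : (∫ x, v x ∂μ) ∈ T := hTconv.integral_mem hTcpt.isClosed haeT hint
      refine ⟨(φ Set.univ).toReal, ENNReal.toReal_nonneg, _, hwT, ?_⟩
      funext a
      have hμ0 : φ Set.univ ≠ 0 := fun h => h0 (Measure.measure_univ_eq_zero.mp h)
      have hφμ : φ = (φ Set.univ) • μ := by
        rw [hμ, smul_smul, ENNReal.mul_inv_cancel hμ0 (measure_ne_top _ _), one_smul]
      have hproj : ∫ x, v x a ∂μ = (∫ x, v x ∂μ) a := by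
        have hc := (ContinuousLinearMap.proj a (R := ℝ) (φ := fun _ : I => ℝ)).integral_comp_comm hint
        simpa using hc
      have hya : y a = (φ Set.univ).toReal * ∫ x, v x a ∂μ := by
        rw [hmom a]
        conv_lhs => rw [hφμ]
        rw [integral_smul_measure, smul_eq_mul]
      rw [hya, hproj]
      simp [Pi.smul_apply, smul_eq_mul]
  -- D ⊆ Δ
  have hDΔ : ∀ y ∈ D, (∃ φ : Measure (Fin n → ℝ), IsFiniteMeasure φ ∧ φ Kᶜ = 0 ∧
      ∀ a : I, y a = ∫ x, v x a ∂φ) := by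
    rintro y ⟨t, ht, w, hwT, rfl⟩
    rw [hT, _root_.convexHull_eq] at hwT
    obtain ⟨ι, s, wt, z, hwt0, hwt1, hzS, hcm⟩ := hwT
    have hz : ∀ i ∈ s, ∃ x, x ∈ K ∧ v x = z i := by
      intro i hi
      obtain ⟨x, hx, hvx⟩ := hzS i hi
      exact ⟨x, hx, hvx⟩
    choose! xp hxpK hxpv using hz
    set φ : Measure (Fin n → ℝ) :=
      ∑ i ∈ s, (ENNReal.ofReal (t * wt i)) • Measure.dirac (xp i) with hφ
    have hφapp : ∀ U : Set (Fin n → ℝ),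
        φ U = ∑ i ∈ s, ENNReal.ofReal (t * wt i) * Measure.dirac (xp i) U := by
      intro U
      rw [hφ, Measure.finset_sum_apply]
      simp [Measure.smul_apply, smul_eq_mul]
    haveI hfin : IsFiniteMeasure φ := by
      constructor
      rw [hφapp]
      apply ENNReal.sum_lt_top.mpr
      intro i hi
      exact ENNReal.mul_lt_top ENNReal.ofReal_lt_top (measure_lt_top _ _)
    have hva : ∀ a : I, Continuous fun x : Fin n → ℝ => v x a :=
      fun a => (continuous_apply a).comp hvcont
    refine ⟨φ, hfin, ?_, ?_⟩
    · rw [hφapp]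
      apply Finset.sum_eq_zero
      intro i hi
      rw [Measure.dirac_apply' _ hK.isClosed.measurableSet.compl]
      simp [Set.indicator, hxpK i hi]
    · intro a
      have hints : ∀ i ∈ s, Integrable (fun x => v x a)
          ((ENNReal.ofReal (t * wt i)) • Measure.dirac (xp i)) := by
        intro i hi
        apply Integrable.smul_measure _ ENNReal.ofReal_ne_top
        refine ⟨(hva a).aestronglyMeasurable, ?_⟩
        rw [MeasureTheory.HasFiniteIntegral]
        rw [MeasureTheory.lintegral_dirac' _ ((hva a).measurable.enorm)]
        exact enorm_lt_top
      rw [hφ, integral_finset_sum_measure hints]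
      have hterm : ∀ i ∈ s, ∫ x, v x a ∂((ENNReal.ofReal (t * wt i)) • Measure.dirac (xp i))
          = t * wt i * z i a := by
        intro i hi
        rw [integral_smul_measure, integral_dirac' _ _ (hva a).stronglyMeasurable,
          ENNReal.toReal_ofReal (mul_nonneg ht (hwt0 i hi)), ← hxpv i hi]
        simp [smul_eq_mul]
      rw [Finset.sum_congr rfl hterm]
      rw [← hcm, Finset.centerMass_eq_of_sum_1 _ _ hwt1]
      simp only [Pi.smul_apply, smul_eq_mul, Finset.sum_apply]
      rw [Finset.mul_sum]
      apply Finset.sum_congr rfl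
      intro i hi
      ring
  ext y
  constructor
  · intro hy
    exact hDΔ y (hdualD y hy)
  · intro hy
    exact hDdual y (hΔD y hy)
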